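/- arXiv:2506.17555 — 3 statements merged into one kernel-verified Lean document; each statement's English description precedes it below -/
import Mathlib

section
/- Let π : (Y,S) → (X,T) be a factor map between topological dynamical systems on compact metric spaces (π continuous surjective with π∘S = T∘π). Let ℰ : M(X) → ℝ be continuous (an energy) and 𝒰 a finite open cover of X. Then for every n ≥ 1, p_n(S, ℰ∘π_*; π^{-1}𝒰) = p_n(T, ℰ; 𝒰), where p_n(T, ℰ; 𝒰) = inf { ∑_{V∈𝒱} sup_{x∈V} e^{n ℰ(Δ_x^n)} : 𝒱 is a finite Borel cover of X refining 𝒰_0^{n-1} }, and consequently P(S, ℰ∘π_*; π^{-1}𝒰) = P(T, ℰ; 𝒰). -/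
open MeasureTheory Filter Set
open scoped ENNReal NNReal Classical

set_option linter.unusedSectionVars false

variable {X : Type*} [MetricSpace X] [CompactSpace X] [MeasurableSpace X] [BorelSpace X]

/-- The empirical measure `Δ_x^n = (1/n) ∑_{i<n} δ_{T^i x}` as a `Measure`. -/
noncomputable def empMeas (T : X → X) (n : ℕ) (x : X) : Measure X :=
  (n : ℝ≥0∞)⁻¹ • ∑ i ∈ Finset.range n, Measure.dirac (T^[i] x)

theorem empMeas_prob (T : X → X) {n : ℕ} (hn : n ≠ 0) (x : X) :
    IsProbabilityMeasure (empMeas T n x) := by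
  constructor
  simp only [empMeas, Measure.smul_apply, smul_eq_mul, Measure.finset_sum_apply,
    measure_univ, Finset.sum_const, Finset.card_range, nsmul_eq_mul, mul_one]
  exact ENNReal.inv_mul_cancel (by exact_mod_cast hn) (by simp)

/-- The empirical measure as a probability measure (junk value `δ_x` for `n = 0`). -/
noncomputable def empPM (T : X → X) (n : ℕ) (x : X) : ProbabilityMeasure X :=
  if hn : n = 0 then ⟨Measure.dirac x, inferInstance⟩
  else ⟨empMeas T n x, empMeas_prob T hn x⟩

/-- The weight `e^{n ℰ(Δ_x^n)}`. -/
noncomputable def wt (T : X → X) (ℰ : ProbabilityMeasure X → ℝ) (n : ℕ) (x : X) : ℝ :=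
  Real.exp (n * ℰ (empPM T n x))

/-- Kantorovich–Rubinstein (Wasserstein-1) distance. -/
noncomputable def Wass (μ ν : Measure X) : ℝ :=
  sSup {r | ∃ g : X → ℝ, LipschitzWith 1 g ∧ r = (∫ x, g x ∂μ) - ∫ x, g x ∂ν}

/-- The dynamical join `𝒰_0^{n-1} = ⋁_{i=0}^{n-1} T^{-i} 𝒰`. -/
noncomputable def joinF (T : X → X) (𝒰 : Finset (Set X)) (n : ℕ) : Finset (Set X) :=
  (Fintype.piFinset fun _ : Fin n => 𝒰).image fun u => ⋂ i : Fin n, T^[(i : ℕ)] ⁻¹' u i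

def IsBorelCover (𝒱 : Finset (Set X)) : Prop :=
  (∀ V ∈ 𝒱, MeasurableSet V) ∧ ⋃₀ (𝒱 : Set (Set X)) = univ

def IsOpenCover (𝒰 : Finset (Set X)) : Prop :=
  (∀ U ∈ 𝒰, IsOpen U) ∧ ⋃₀ (𝒰 : Set (Set X)) = univ

/-- `𝒱` refines `𝒲`: every element of `𝒱` is contained in some element of `𝒲`. -/
def Refines (𝒱 𝒲 : Finset (Set X)) : Prop := ∀ V ∈ 𝒱, ∃ W ∈ 𝒲, V ⊆ W

def IsPartitionF (α : Finset (Set X)) : Prop :=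
  (∀ A ∈ α, MeasurableSet A) ∧ ⋃₀ (α : Set (Set X)) = univ ∧
    ∀ A ∈ α, ∀ B ∈ α, A ≠ B → Disjoint A B

noncomputable def p1 (T : X → X) (ℰ : ProbabilityMeasure X → ℝ) (𝒰 : Finset (Set X)) (n : ℕ) : ℝ :=
  sInf {r | ∃ 𝒱 : Finset (Set X), IsBorelCover 𝒱 ∧ Refines 𝒱 (joinF T 𝒰 n) ∧
    r = ∑ V ∈ 𝒱, sSup (wt T ℰ n '' V)}

noncomputable def p2 (T : X → X) (ℰ : ProbabilityMeasure X → ℝ) (𝒰 : Finset (Set X)) (n : ℕ) : ℝ :=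
  sInf {r | ∃ 𝒱 : Finset (Set X), IsBorelCover 𝒱 ∧ Refines 𝒱 (joinF T 𝒰 n) ∧
    r = ∑ V ∈ 𝒱, sInf (wt T ℰ n '' V)}

noncomputable def p3 (T : X → X) (ℰ : ProbabilityMeasure X → ℝ) (𝒰 : Finset (Set X)) (n : ℕ) : ℝ :=
  sInf {r | ∃ β : Finset (Set X), β ⊆ joinF T 𝒰 n ∧ ⋃₀ (β : Set (Set X)) = univ ∧
    r = ∑ B ∈ β, sSup (wt T ℰ n '' B)}

noncomputable def p4 (T : X → X) (ℰ : ProbabilityMeasure X → ℝ) (𝒰 : Finset (Set X)) (n : ℕ) : ℝ :=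
  sInf {r | ∃ β : Finset (Set X), β ⊆ joinF T 𝒰 n ∧ ⋃₀ (β : Set (Set X)) = univ ∧
    r = ∑ B ∈ β, sInf (wt T ℰ n '' B)}

/-- `E` is an `(n,ε)`-separated set. -/
def IsSeparated (T : X → X) (n : ℕ) (ε : ℝ) (E : Finset X) : Prop :=
  ∀ x ∈ E, ∀ y ∈ E, x ≠ y → ∃ i < n, ε ≤ dist (T^[i] x) (T^[i] y)

/-- `F` is an `(n,ε)`-spanning set. -/
def IsSpanning (T : X → X) (n : ℕ) (ε : ℝ) (F : Finset X) : Prop :=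
  ∀ x : X, ∃ y ∈ F, ∀ i < n, dist (T^[i] x) (T^[i] y) < ε

noncomputable def Pn (T : X → X) (ℰ : ProbabilityMeasure X → ℝ) (n : ℕ) (ε : ℝ) : ℝ :=
  sSup {r | ∃ E : Finset X, IsSeparated T n ε E ∧ r = ∑ x ∈ E, wt T ℰ n x}

noncomputable def Qn (T : X → X) (ℰ : ProbabilityMeasure X → ℝ) (n : ℕ) (ε : ℝ) : ℝ :=
  sInf {r | ∃ F : Finset X, IsSpanning T n ε F ∧ r = ∑ x ∈ F, wt T ℰ n x}

/-- `τ_ε`, modulus of continuity of the energy w.r.t. the Wasserstein distance. -/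
noncomputable def tauE (ℰ : ProbabilityMeasure X → ℝ) (ε : ℝ) : ℝ :=
  sSup {r | ∃ μ ν : ProbabilityMeasure X, Wass (μ : Measure X) (ν : Measure X) ≤ ε ∧
    r = |ℰ μ - ℰ ν|}

/-- Shannon entropy of a finite collection of sets. -/
noncomputable def entF (μ : Measure X) (α : Finset (Set X)) : ℝ :=
  ∑ A ∈ α, Real.negMulLog (μ A).toReal

/-- `H_μ(𝒰)`: infimum of entropies of partitions refining `𝒰`. -/
noncomputable def Hcov (μ : Measure X) (𝒰 : Finset (Set X)) : ℝ :=
  sInf {r | ∃ α : Finset (Set X), IsPartitionF α ∧ Refines α 𝒰 ∧ r = entF μ α}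

/-- Local measure-theoretic entropy `h_μ(T,𝒰)`. -/
noncomputable def hcov (T : X → X) (μ : Measure X) (𝒰 : Finset (Set X)) : ℝ :=
  Filter.atTop.limsup fun n => Hcov μ (joinF T 𝒰 n) / n

section Aux

lemma map_finset_sum' {α β ι : Type*} [MeasurableSpace α] [MeasurableSpace β] {f : α → β}
    (hf : Measurable f) (s : Finset ι) (μ : ι → Measure α) :
    Measure.map f (∑ i ∈ s, μ i) = ∑ i ∈ s, Measure.map f (μ i) := by
  classical
  induction s using Finset.induction with
  | empty => simp
  | insert a s h ih => rw [Finset.sum_insert h, Finset.sum_insert h, Measure.map_add _ _ hf, ih]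

lemma sum_image_le' {α β : Type*} [DecidableEq β] {s : Finset α} (f : α → β) (g : β → ℝ)
    (hg : ∀ a ∈ s, 0 ≤ g (f a)) : ∑ b ∈ s.image f, g b ≤ ∑ a ∈ s, g (f a) := by
  classical
  induction s using Finset.induction with
  | empty => simp
  | @insert a s ha ih =>
    rw [Finset.image_insert, Finset.sum_insert ha]
    have hg' : ∀ x ∈ s, 0 ≤ g (f x) := fun x hx => hg x (Finset.mem_insert_of_mem hx)
    by_cases h : f a ∈ s.image f
    · rw [Finset.insert_eq_self.mpr h]
      exact le_add_of_nonneg_of_le (hg a (Finset.mem_insert_self a s)) (ih hg')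
    · rw [Finset.sum_insert h]
      exact add_le_add le_rfl (ih hg')

variable {X : Type*} [MetricSpace X] [CompactSpace X] [MeasurableSpace X] [BorelSpace X]

lemma empPM_continuous {T : X → X} (hT : Continuous T) {n : ℕ} (hn : n ≠ 0) :
    Continuous fun x => empPM T n x := by
  rw [continuous_iff_continuousAt]
  intro x₀
  unfold ContinuousAt
  rw [ProbabilityMeasure.tendsto_iff_forall_integral_tendsto]
  intro f
  have key : ∀ x : X, (∫ ω, f ω ∂((empPM T n x : Measure X)))
      = ((n : ℝ≥0∞)⁻¹).toReal * ∑ i ∈ Finset.range n, f (T^[i] x) := by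
    intro x
    have hcoe : (empPM T n x : Measure X) = empMeas T n x := by simp [empPM, hn]
    rw [hcoe, empMeas, integral_smul_measure,
      integral_finset_sum_measure (fun i _ => f.integrable _)]
    simp [integral_dirac, smul_eq_mul]
  simp_rw [key]
  exact ((continuous_const.mul (continuous_finset_sum _ fun i _ =>
    f.continuous.comp (hT.iterate i))).tendsto x₀)

lemma wt_continuous {T : X → X} (hT : Continuous T) {ℰ : ProbabilityMeasure X → ℝ}
    (hE : Continuous ℰ) {n : ℕ} (hn : n ≠ 0) : Continuous (wt T ℰ n) :=
  Real.continuous_exp.comp (continuous_const.mul (hE.comp (empPM_continuous hT hn)))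

end Aux
section Aux2
variable {X : Type*} [MetricSpace X] [CompactSpace X] [MeasurableSpace X] [BorelSpace X]
variable {Y : Type*} [MetricSpace Y] [CompactSpace Y] [MeasurableSpace Y] [BorelSpace Y]
variable {T : X → X} {S : Y → Y} {π : Y → X}

lemma empPM_map (hπ : Continuous π) (hcomm : π ∘ S = T ∘ π) (n : ℕ) (y : Y) :
    (empPM S n y).map hπ.measurable.aemeasurable = empPM T n (π y) := by
  have hsemi : Function.Semiconj π S T := fun z => congrFun hcomm z
  apply Subtype.ext
  show Measure.map π (empPM S n y : Measure Y) = (empPM T n (π y) : Measure X)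
  rcases Nat.eq_zero_or_pos n with h | h
  · subst h
    simp only [empPM, dif_pos rfl]
    exact Measure.map_dirac' hπ.measurable y
  · have hn : n ≠ 0 := h.ne'
    rw [show (empPM S n y : Measure Y) = empMeas S n y by simp [empPM, hn],
      show (empPM T n (π y) : Measure X) = empMeas T n (π y) by simp [empPM, hn]]
    show Measure.map π (empMeas S n y) = empMeas T n (π y)
    rw [empMeas, empMeas, Measure.map_smul, map_finset_sum' hπ.measurable]
    congr 1
    refine Finset.sum_congr rfl fun i _ => ?_
    rw [Measure.map_dirac' hπ.measurable, (hsemi.iterate_right i) y]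

lemma wt_comp (hπ : Continuous π) (hcomm : π ∘ S = T ∘ π)
    (ℰ : ProbabilityMeasure X → ℝ) (n : ℕ) (y : Y) :
    wt S (fun ν : ProbabilityMeasure Y => ℰ (ν.map hπ.measurable.aemeasurable)) n y
      = wt T ℰ n (π y) := by
  simp only [wt, empPM_map hπ hcomm]

lemma joinF_preimage (hcomm : π ∘ S = T ∘ π) (𝒰 : Finset (Set X)) (n : ℕ) :
    joinF S (𝒰.image fun U => π ⁻¹' U) n = (joinF T 𝒰 n).image fun U => π ⁻¹' U := by
  have hsemi : Function.Semiconj π S T := fun z => congrFun hcomm z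
  have key : ∀ v : Fin n → Set X,
      (⋂ i : Fin n, S^[(i : ℕ)] ⁻¹' (π ⁻¹' v i)) = π ⁻¹' ⋂ i : Fin n, T^[(i : ℕ)] ⁻¹' v i := by
    intro v
    rw [Set.preimage_iInter]
    refine Set.iInter_congr fun i => ?_
    ext y
    simp only [Set.mem_preimage, (hsemi.iterate_right (i : ℕ)) y]
  ext s
  simp only [joinF, Finset.mem_image, Fintype.mem_piFinset]
  constructor
  · rintro ⟨u, hu, rfl⟩
    choose v hv hveq using fun i => hu i
    refine ⟨⋂ i : Fin n, T^[(i : ℕ)] ⁻¹' v i, ⟨v, hv, rfl⟩, ?_⟩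
    rw [← key]
    exact Set.iInter_congr fun i => by rw [hveq i]
  · rintro ⟨W, ⟨v, hv, rfl⟩, rfl⟩
    exact ⟨fun i => π ⁻¹' v i, fun i => ⟨v i, hv i, rfl⟩, key v⟩

lemma joinF_isOpen (hT : Continuous T) {𝒰 : Finset (Set X)} (h : ∀ U ∈ 𝒰, IsOpen U)
    {n : ℕ} : ∀ W ∈ joinF T 𝒰 n, IsOpen W := by
  intro W hW
  obtain ⟨v, hv, rfl⟩ := Finset.mem_image.mp hW
  exact isOpen_iInter_of_finite fun i =>
    (h _ ((Fintype.mem_piFinset.mp hv) i)).preimage (hT.iterate (i : ℕ))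

lemma joinF_cover {𝒰 : Finset (Set X)} (h : ⋃₀ (𝒰 : Set (Set X)) = univ) (n : ℕ) :
    ⋃₀ ((joinF T 𝒰 n : Finset (Set X)) : Set (Set X)) = univ := by
  rw [Set.eq_univ_iff_forall]
  intro x
  have : ∀ i : Fin n, ∃ U ∈ 𝒰, T^[(i : ℕ)] x ∈ U := by
    intro i
    have := Set.eq_univ_iff_forall.mp h (T^[(i : ℕ)] x)
    obtain ⟨U, hU, hmem⟩ := this
    exact ⟨U, hU, hmem⟩
  choose u hu hmem using this
  refine Set.mem_sUnion.mpr ⟨⋂ i : Fin n, T^[(i : ℕ)] ⁻¹' u i, ?_, ?_⟩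
  · exact Finset.mem_coe.mpr (Finset.mem_image.mpr ⟨u, Fintype.mem_piFinset.mpr hu, rfl⟩)
  · exact Set.mem_iInter.mpr fun i => hmem i

lemma sSup_wt_nonneg (T : X → X) (ℰ : ProbabilityMeasure X → ℝ) (n : ℕ) (V : Set X) :
    0 ≤ sSup (wt T ℰ n '' V) :=
  Real.sSup_nonneg (by rintro r ⟨x, -, rfl⟩; exact (Real.exp_pos _).le)

lemma sSup_image_le_closure {f : X → ℝ} (hf : Continuous f) (hpos : ∀ x, 0 ≤ f x)
    {A B : Set X} (hAB : A ⊆ closure B) :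
    sSup (f '' A) ≤ sSup (f '' B) := by
  have hbdd : BddAbove (f '' B) :=
    BddAbove.mono (Set.image_mono (Set.subset_univ B))
      (isCompact_univ.bddAbove_image hf.continuousOn)
  refine Real.sSup_le ?_ (Real.sSup_nonneg (by rintro r ⟨x, -, rfl⟩; exact hpos x))
  rintro r ⟨x, hx, rfl⟩
  have hclosed : IsClosed {z | f z ≤ sSup (f '' B)} := isClosed_le hf continuous_const
  have hsub : B ⊆ {z | f z ≤ sSup (f '' B)} := fun b hb => le_csSup hbdd ⟨b, hb, rfl⟩
  exact hclosed.closure_subset_iff.mpr hsub (hAB hx)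

end Aux2

/-- invariance of the nonlinear local pressure under factor maps. -/
theorem p_n_factor_invariance {Y : Type*} [MetricSpace Y] [CompactSpace Y]
    [MeasurableSpace Y] [BorelSpace Y]
    (T : X → X) (hT : Continuous T) (S : Y → Y) (hS : Continuous S)
    (π : Y → X) (hπ : Continuous π) (hsurj : Function.Surjective π)
    (hcomm : π ∘ S = T ∘ π)
    (ℰ : ProbabilityMeasure X → ℝ) (hE : Continuous ℰ)
    (𝒰 : Finset (Set X)) (h𝒰 : IsOpenCover 𝒰) :
    (∀ n : ℕ, 1 ≤ n →
      p1 S (fun ν : ProbabilityMeasure Y => ℰ (ν.map hπ.measurable.aemeasurable))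
        (𝒰.image fun U => π ⁻¹' U) n = p1 T ℰ 𝒰 n) ∧
    Filter.atTop.limsup (fun n =>
        Real.log (p1 S (fun ν : ProbabilityMeasure Y => ℰ (ν.map hπ.measurable.aemeasurable))
          (𝒰.image fun U => π ⁻¹' U) n) / n) =
      Filter.atTop.limsup (fun n => Real.log (p1 T ℰ 𝒰 n) / n) := by

  classical
  have hπm : Measurable π := hπ.measurable
  set ℰ' : ProbabilityMeasure Y → ℝ :=
    fun ν : ProbabilityMeasure Y => ℰ (ν.map hπ.measurable.aemeasurable) with hℰ'
  have main : ∀ n : ℕ, 1 ≤ n →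
      p1 S ℰ' (𝒰.image fun U => π ⁻¹' U) n = p1 T ℰ 𝒰 n := by
    intro n hn1
    have hn : n ≠ 0 := Nat.one_le_iff_ne_zero.mp hn1
    set 𝒰' : Finset (Set Y) := 𝒰.image fun U => π ⁻¹' U with h𝒰'
    set SX := {r | ∃ 𝒱 : Finset (Set X), IsBorelCover 𝒱 ∧ Refines 𝒱 (joinF T 𝒰 n) ∧
      r = ∑ V ∈ 𝒱, sSup (wt T ℰ n '' V)} with hSX
    set SY := {r | ∃ 𝒱 : Finset (Set Y), IsBorelCover 𝒱 ∧ Refines 𝒱 (joinF S 𝒰' n) ∧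
      r = ∑ V ∈ 𝒱, sSup (wt S ℰ' n '' V)} with hSY
    have hwt : ∀ y, wt S ℰ' n y = wt T ℰ n (π y) := wt_comp hπ hcomm ℰ n
    have hjoin : joinF S 𝒰' n = (joinF T 𝒰 n).image fun U => π ⁻¹' U :=
      joinF_preimage hcomm 𝒰 n
    have stepA : SX ⊆ SY := by
      rintro r ⟨𝒱, ⟨hmeas, hcov⟩, href, rfl⟩
      refine ⟨𝒱.image fun V => π ⁻¹' V, ⟨?_, ?_⟩, ?_, ?_⟩
      · intro V' hV'
        obtain ⟨V, hV, rfl⟩ := Finset.mem_image.mp hV'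
        exact hπm (hmeas V hV)
      · rw [Set.eq_univ_iff_forall]
        intro y
        have hy : π y ∈ ⋃₀ (𝒱 : Set (Set X)) := by rw [hcov]; trivial
        obtain ⟨V, hV, hmem⟩ := hy
        exact ⟨π ⁻¹' V, Finset.mem_coe.mpr (Finset.mem_image_of_mem _ hV), hmem⟩
      · intro V' hV'
        obtain ⟨V, hV, rfl⟩ := Finset.mem_image.mp hV'
        obtain ⟨W, hW, hsub⟩ := href V hV
        exact ⟨π ⁻¹' W, hjoin ▸ Finset.mem_image_of_mem _ hW, Set.preimage_mono hsub⟩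
      · rw [Finset.sum_image fun a _ b _ h => hsurj.preimage_injective h]
        refine Finset.sum_congr rfl fun V hV => ?_
        congr 1
        have himg : wt S ℰ' n '' (π ⁻¹' V) = wt T ℰ n '' (π '' (π ⁻¹' V)) := by
          rw [← Set.image_comp]
          exact Set.image_congr fun y _ => hwt y
        rw [himg, Set.image_preimage_eq V hsurj]
    have hSXne : SX.Nonempty := by
      refine ⟨_, joinF T 𝒰 n, ⟨?_, joinF_cover h𝒰.2 n⟩, fun V hV => ⟨V, hV, subset_rfl⟩, rfl⟩
      exact fun W hW => (joinF_isOpen hT h𝒰.1 W hW).measurableSet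
    have hSYne : SY.Nonempty := hSXne.mono stepA
    have hbX : BddBelow SX := by
      refine ⟨0, ?_⟩
      rintro r ⟨𝒱, -, -, rfl⟩
      exact Finset.sum_nonneg fun V _ => sSup_wt_nonneg T ℰ n V
    have hbY : BddBelow SY := by
      refine ⟨0, ?_⟩
      rintro r ⟨𝒱, -, -, rfl⟩
      exact Finset.sum_nonneg fun V _ => sSup_wt_nonneg S ℰ' n V
    have stepB : ∀ r ∈ SY, ∃ r' ∈ SX, r' ≤ r := by
      rintro r ⟨𝒱', ⟨hmeas', hcov'⟩, href', rfl⟩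
      have hex : ∀ V : Set Y, ∃ W : Set X,
          (W ∈ joinF T 𝒰 n ∧ V ⊆ π ⁻¹' W) ∨ V ∉ 𝒱' := by
        intro V
        by_cases hV : V ∈ 𝒱'
        · obtain ⟨W', hW', hsub⟩ := href' V hV
          rw [hjoin] at hW'
          obtain ⟨W, hW, rfl⟩ := Finset.mem_image.mp hW'
          exact ⟨W, Or.inl ⟨hW, hsub⟩⟩
        · exact ⟨∅, Or.inr hV⟩
      choose W hW using hex
      have hWmem : ∀ V ∈ 𝒱', W V ∈ joinF T 𝒰 n ∧ V ⊆ π ⁻¹' (W V) :=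
        fun V hV => (hW V).resolve_right fun h => h hV
      set A : Set Y → Set X := fun V => W V ∩ closure (π '' V) with hAdef
      refine ⟨∑ B ∈ 𝒱'.image A, sSup (wt T ℰ n '' B), ⟨𝒱'.image A, ⟨?_, ?_⟩, ?_, rfl⟩, ?_⟩
      · intro B hB
        obtain ⟨V, hV, rfl⟩ := Finset.mem_image.mp hB
        exact ((joinF_isOpen hT h𝒰.1 _ (hWmem V hV).1).measurableSet).inter
          isClosed_closure.measurableSet
      · rw [Set.eq_univ_iff_forall]
        intro x
        obtain ⟨y, rfl⟩ := hsurj x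
        have hy : y ∈ ⋃₀ (𝒱' : Set (Set Y)) := by rw [hcov']; trivial
        obtain ⟨V, hV, hyV⟩ := hy
        refine Set.mem_sUnion.mpr ⟨A V, Finset.mem_coe.mpr
          (Finset.mem_image_of_mem _ hV), ?_, ?_⟩
        · exact (hWmem V hV).2 hyV
        · exact subset_closure ⟨y, hyV, rfl⟩
      · intro B hB
        obtain ⟨V, hV, rfl⟩ := Finset.mem_image.mp hB
        exact ⟨W V, (hWmem V hV).1, Set.inter_subset_left⟩
      · calc ∑ B ∈ 𝒱'.image A, sSup (wt T ℰ n '' B)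
            ≤ ∑ V ∈ 𝒱', sSup (wt T ℰ n '' A V) :=
              sum_image_le' A _ fun V _ => sSup_wt_nonneg T ℰ n (A V)
          _ ≤ ∑ V ∈ 𝒱', sSup (wt S ℰ' n '' V) := by
              refine Finset.sum_le_sum fun V hV => ?_
              have himg : wt S ℰ' n '' V = wt T ℰ n '' (π '' V) := by
                rw [← Set.image_comp]
                exact Set.image_congr fun y _ => hwt y
              rw [himg]
              exact sSup_image_le_closure (wt_continuous hT hE hn)
                (fun x => (Real.exp_pos _).le) Set.inter_subset_right
    have h1 : sInf SY ≤ sInf SX := csInf_le_csInf hbY hSXne stepA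
    have h2 : sInf SX ≤ sInf SY := by
      refine le_csInf hSYne fun r hr => ?_
      obtain ⟨r', hr', hle⟩ := stepB r hr
      exact (csInf_le hbX hr').trans hle
    exact le_antisymm h1 h2
  refine ⟨main, Filter.limsup_congr ?_⟩
  filter_upwards [Filter.eventually_ge_atTop 1] with n hn
  rw [main n hn]
end

section
/- Let (X,T) be a topological dynamical system on a compact metric space, ℰ : M(X) → ℝ an energy, ε > 0, and 𝒰 a finite open cover of X with diam(𝒰) ≤ ε. Set τ_ε = sup { |ℰ(μ) − ℰ(ν)| : μ,ν ∈ M(X), W(μ,ν) ≤ ε }. If δ > 0 is a Lebesgue number of 𝒰, then for all n ≥ 1, e^{−n τ_ε} · p³_n(T,ℰ;𝒰) ≤ Q_n(T,ℰ,δ/2), where Q_n(T,ℰ,ρ) = inf { ∑_{x∈F} e^{nℰ(Δ_x^n)} : F is an (n,ρ)-spanning set of X }. -/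
open MeasureTheory Filter Set
open scoped ENNReal NNReal Classical

set_option linter.unusedSectionVars false

variable {X : Type*} [MetricSpace X] [CompactSpace X] [MeasurableSpace X] [BorelSpace X]

section Part1
open Topology

lemma prob_nonempty_X (μ : ProbabilityMeasure X) : Nonempty X := by
  by_contra h
  rw [not_nonempty_iff] at h
  have h1 : (μ : Measure X) univ = 1 := measure_univ
  rw [Set.univ_eq_empty_iff.mpr h, measure_empty] at h1
  exact zero_ne_one h1

lemma exists_seq_tendsto_probabilityMeasure (μs : ℕ → ProbabilityMeasure X) :
    ∃ (μ : ProbabilityMeasure X) (φ : ℕ → ℕ), StrictMono φ ∧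
      Tendsto (fun k => μs (φ k)) atTop (𝓝 μ) := by
  haveI : Nonempty X := prob_nonempty_X (μs 0)
  obtain ⟨b0, hb0c, -, hb0⟩ := TopologicalSpace.exists_countable_basis X
  set 𝒜 : Set (Set X) := (fun t => ⋃₀ t) '' {t | t.Finite ∧ t ⊆ b0} with h𝒜
  have h𝒜c : 𝒜.Countable := (Set.countable_setOf_finite_subset hb0c).image _
  have h𝒜open : ∀ A ∈ 𝒜, IsOpen A := by
    rintro A ⟨t, ⟨htf, hts⟩, rfl⟩
    exact isOpen_sUnion fun u hu => hb0.isOpen (hts hu)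
  have h𝒜union : ∀ A ∈ 𝒜, ∀ B ∈ 𝒜, A ∪ B ∈ 𝒜 := by
    rintro _ ⟨t, ⟨htf, hts⟩, rfl⟩ _ ⟨t', ⟨htf', hts'⟩, rfl⟩
    exact ⟨t ∪ t', ⟨htf.union htf', union_subset hts hts'⟩, by simp [Set.sUnion_union]⟩
  have hshrink : ∀ K : Set X, IsCompact K → ∀ G : Set X, IsOpen G → K ⊆ G →
      ∃ A ∈ 𝒜, K ⊆ A ∧ A ⊆ G := by
    intro K hK G hG hKG
    have hcov : K ⊆ ⋃ B : {B // B ∈ b0 ∧ B ⊆ G}, (B : Set X) := by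
      intro x hx
      obtain ⟨v, hv, hxv, hvG⟩ := hb0.exists_subset_of_mem_open (hKG hx) hG
      exact Set.mem_iUnion.mpr ⟨⟨v, hv, hvG⟩, hxv⟩
    obtain ⟨s, hs⟩ := hK.elim_finite_subcover (fun B : {B // B ∈ b0 ∧ B ⊆ G} => (B : Set X))
      (fun B => hb0.isOpen B.2.1) hcov
    refine ⟨⋃₀ ((fun B : {B // B ∈ b0 ∧ B ⊆ G} => (B : Set X)) '' ↑s), ?_, ?_, ?_⟩
    · exact ⟨_, ⟨(s.finite_toSet.image _), by rintro _ ⟨B, -, rfl⟩; exact B.2.1⟩, rfl⟩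
    · intro x hx
      obtain ⟨B, hBs, hxB⟩ := Set.mem_iUnion₂.mp (hs hx)
      exact ⟨B, ⟨B, hBs, rfl⟩, hxB⟩
    · rintro x ⟨_, ⟨B, -, rfl⟩, hxB⟩
      exact B.2.2 hxB
  have huniv𝒜 : (univ : Set X) ∈ 𝒜 := by
    obtain ⟨A, hA𝒜, hA1, -⟩ := hshrink univ isCompact_univ univ isOpen_univ subset_rfl
    rwa [Set.eq_univ_of_univ_subset hA1] at hA𝒜
  obtain ⟨e, he⟩ := h𝒜c.exists_eq_range ⟨univ, huniv𝒜⟩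
  have he𝒜 : ∀ m, e m ∈ 𝒜 := fun m => he ▸ Set.mem_range_self m
  have hmem𝒜 : ∀ A ∈ 𝒜, ∃ m, e m = A := by
    intro A hA
    obtain ⟨m, hm⟩ := (he ▸ hA : A ∈ Set.range e)
    exact ⟨m, hm⟩
  have hemeas : ∀ m, MeasurableSet (e m) := fun m => (h𝒜open _ (he𝒜 m)).measurableSet
  obtain ⟨m0, hm0⟩ := hmem𝒜 univ huniv𝒜
  -- diagonal subsequence
  let v : ℕ → (ℕ → ↥(Set.Icc (0:ℝ) 1)) := fun k m =>
    ⟨((μs k (e m) : ℝ≥0) : ℝ), ⟨(μs k (e m)).2, by exact_mod_cast (μs k).apply_le_one (e m)⟩⟩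
  obtain ⟨p, φ, hφ, hconv⟩ := SeqCompactSpace.tendsto_subseq v
  set LN : ℕ → ℝ≥0 := fun m => ((p m : ℝ)).toNNReal with hLN
  have hm : ∀ m, Tendsto (fun k => μs (φ k) (e m)) atTop (𝓝 (LN m)) := by
    intro m
    have h1 : Tendsto (fun k => ((v (φ k)) m : ℝ)) atTop (𝓝 ((p m : ℝ))) := by
      have h0 : Tendsto (fun k => (v (φ k)) m) atTop (𝓝 (p m)) :=
        (((continuous_apply m).tendsto p).comp hconv : _)
      exact ((continuous_subtype_val.tendsto (p m)).comp h0 : _)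
    rw [← NNReal.tendsto_coe]
    simpa [hLN, Real.coe_toNNReal _ (p m).2.1] using h1
  have LNmono : ∀ {m m'}, e m ⊆ e m' → LN m ≤ LN m' := fun {m m'} h =>
    le_of_tendsto_of_tendsto' (hm m) (hm m') (fun k => (μs (φ k)).apply_mono h)
  have LNsub : ∀ {m m' m''}, e m'' = e m ∪ e m' → LN m'' ≤ LN m + LN m' := by
    intro m m' m'' hme
    refine le_of_tendsto_of_tendsto' (hm m'') ((hm m).add (hm m')) (fun k => ?_)
    have : ((μs (φ k)) (e m'') : ℝ≥0∞) ≤ ((μs (φ k)) (e m) : ℝ≥0) + ((μs (φ k)) (e m') : ℝ≥0) := by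
      rw [ProbabilityMeasure.ennreal_coeFn_eq_coeFn_toMeasure,
        ProbabilityMeasure.ennreal_coeFn_eq_coeFn_toMeasure,
        ProbabilityMeasure.ennreal_coeFn_eq_coeFn_toMeasure, hme]
      exact measure_union_le _ _
    exact_mod_cast this
  have LNadd : ∀ {m m' m''}, e m'' = e m ∪ e m' → Disjoint (e m) (e m') →
      LN m'' = LN m + LN m' := by
    intro m m' m'' hme hd
    refine tendsto_nhds_unique (hm m'') ?_
    have : (fun k => μs (φ k) (e m) + μs (φ k) (e m')) = fun k => μs (φ k) (e m'') := by
      funext k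
      have : ((μs (φ k)) (e m'') : ℝ≥0∞) = ((μs (φ k)) (e m) : ℝ≥0) + ((μs (φ k)) (e m') : ℝ≥0) := by
        rw [ProbabilityMeasure.ennreal_coeFn_eq_coeFn_toMeasure,
          ProbabilityMeasure.ennreal_coeFn_eq_coeFn_toMeasure,
          ProbabilityMeasure.ennreal_coeFn_eq_coeFn_toMeasure, hme]
        exact measure_union hd (hemeas m')
      exact_mod_cast this.symm
    rw [← this]
    exact (hm m).add (hm m')
  have LNuniv : LN m0 = 1 := by
    refine tendsto_nhds_unique (hm m0) ?_
    simp only [hm0, ProbabilityMeasure.coeFn_univ]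
    exact tendsto_const_nhds
  -- the content
  have hKne : ∀ K : TopologicalSpace.Compacts X, (LN '' {m | (K : Set X) ⊆ e m}).Nonempty :=
    fun K => ⟨LN m0, ⟨m0, by simp [hm0], rfl⟩⟩
  set lam : TopologicalSpace.Compacts X → ℝ≥0 :=
    fun K => sInf (LN '' {m | (K : Set X) ⊆ e m}) with hlam
  have lam_le : ∀ (K : TopologicalSpace.Compacts X) {m}, (K : Set X) ⊆ e m → lam K ≤ LN m :=
    fun K m hme => csInf_le (OrderBot.bddBelow _) ⟨m, hme, rfl⟩
  have lam_mono : ∀ K₁ K₂ : TopologicalSpace.Compacts X, (K₁ : Set X) ⊆ K₂ → lam K₁ ≤ lam K₂ := by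
    intro K₁ K₂ h
    exact csInf_le_csInf (OrderBot.bddBelow _) (hKne K₂)
      (Set.image_mono (fun m hm2 => h.trans hm2))
  have lam_sup_le : ∀ K₁ K₂ : TopologicalSpace.Compacts X, lam (K₁ ⊔ K₂) ≤ lam K₁ + lam K₂ := by
    intro K₁ K₂
    have key : ∀ x ∈ LN '' {m | (K₁ : Set X) ⊆ e m}, ∀ y ∈ LN '' {m | (K₂ : Set X) ⊆ e m},
        lam (K₁ ⊔ K₂) ≤ x + y := by
      rintro _ ⟨m₁, hm₁, rfl⟩ _ ⟨m₂, hm₂, rfl⟩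
      obtain ⟨m₃, hm₃⟩ := hmem𝒜 _ (h𝒜union _ (he𝒜 m₁) _ (he𝒜 m₂))
      refine (lam_le (K₁ ⊔ K₂) (m := m₃) ?_).trans (LNsub hm₃)
      rw [hm₃, TopologicalSpace.Compacts.coe_sup]
      exact Set.union_subset_union hm₁ hm₂
    have h1 : ∀ x ∈ LN '' {m | (K₁ : Set X) ⊆ e m}, lam (K₁ ⊔ K₂) - x ≤ lam K₂ :=
      fun x hx => le_csInf (hKne K₂) (fun y hy => tsub_le_iff_left.mpr (key x hx y hy))
    have h2 : lam (K₁ ⊔ K₂) - lam K₂ ≤ lam K₁ :=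
      le_csInf (hKne K₁) (fun x hx => tsub_le_iff_right.mpr
        (tsub_le_iff_left.mp (h1 x hx)))
    exact tsub_le_iff_right.mp h2
  have lam_disj : ∀ K₁ K₂ : TopologicalSpace.Compacts X, Disjoint (K₁ : Set X) (K₂ : Set X) →
      IsClosed (K₁ : Set X) → IsClosed (K₂ : Set X) → lam (K₁ ⊔ K₂) = lam K₁ + lam K₂ := by
    intro K₁ K₂ hd hc₁ hc₂
    refine le_antisymm (lam_sup_le K₁ K₂) ?_
    refine le_csInf (hKne (K₁ ⊔ K₂)) ?_
    rintro _ ⟨m, hmK, rfl⟩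
    obtain ⟨dd, hdd, hddis⟩ := hd.exists_thickenings K₁.2 hc₂
    have hK1sub : (K₁ : Set X) ⊆ e m ∩ Metric.thickening dd K₁ := by
      rw [TopologicalSpace.Compacts.coe_sup] at hmK
      exact Set.subset_inter (Set.subset_union_left.trans hmK)
        (Metric.self_subset_thickening hdd _)
    have hK2sub : (K₂ : Set X) ⊆ e m ∩ Metric.thickening dd K₂ := by
      rw [TopologicalSpace.Compacts.coe_sup] at hmK
      exact Set.subset_inter (Set.subset_union_right.trans hmK)
        (Metric.self_subset_thickening hdd _)
    obtain ⟨A₁, hA₁𝒜, hKA₁, hA₁sub⟩ := hshrink K₁ K₁.2 _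
      ((h𝒜open _ (he𝒜 m)).inter Metric.isOpen_thickening) hK1sub
    obtain ⟨A₂, hA₂𝒜, hKA₂, hA₂sub⟩ := hshrink K₂ K₂.2 _
      ((h𝒜open _ (he𝒜 m)).inter Metric.isOpen_thickening) hK2sub
    obtain ⟨m₁, hm₁⟩ := hmem𝒜 _ hA₁𝒜
    obtain ⟨m₂, hm₂⟩ := hmem𝒜 _ hA₂𝒜
    obtain ⟨m₃, hm₃⟩ := hmem𝒜 _ (h𝒜union _ hA₁𝒜 _ hA₂𝒜)
    have hdisA : Disjoint (e m₁) (e m₂) := by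
      rw [hm₁, hm₂]
      exact hddis.mono (hA₁sub.trans Set.inter_subset_right)
        (hA₂sub.trans Set.inter_subset_right)
    have hadd : LN m₃ = LN m₁ + LN m₂ := LNadd (by rw [hm₁, hm₂, hm₃]) hdisA
    have hle3 : lam K₁ + lam K₂ ≤ LN m₃ := by
      rw [hadd]
      exact add_le_add (lam_le K₁ (m := m₁) (hm₁ ▸ hKA₁)) (lam_le K₂ (m := m₂) (hm₂ ▸ hKA₂))
    refine hle3.trans (LNmono ?_)
    rw [hm₃]
    exact Set.union_subset (hA₁sub.trans Set.inter_subset_left)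
      (hA₂sub.trans Set.inter_subset_left)
  set C : MeasureTheory.Content X := ⟨lam, lam_mono, lam_disj, lam_sup_le⟩ with hC
  have hCapp : ∀ K : TopologicalSpace.Compacts X, C K = (lam K : ℝ≥0∞) := fun K => rfl
  have lam_univ : lam ⟨univ, isCompact_univ⟩ = 1 := by
    refine le_antisymm ((lam_le _ (m := m0) (by simp [hm0])).trans (le_of_eq LNuniv)) ?_
    refine le_csInf (hKne _) ?_
    rintro _ ⟨m, hmK, rfl⟩
    have hemu : e m = univ := Set.eq_univ_of_univ_subset hmK
    have h1 : LN m = 1 := by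
      refine tendsto_nhds_unique (hm m) ?_
      simp only [hemu, ProbabilityMeasure.coeFn_univ]
      exact tendsto_const_nhds
    exact h1.ge
  have hCuniv : C.measure univ = 1 := by
    rw [C.measure_apply MeasurableSet.univ]
    refine le_antisymm ?_ ?_
    · calc C.outerMeasure univ = C.innerContent ⟨univ, isOpen_univ⟩ :=
            C.outerMeasure_opens ⟨univ, isOpen_univ⟩
        _ ≤ C ⟨univ, isCompact_univ⟩ := C.innerContent_le _ _ (subset_refl _)
        _ = 1 := by rw [hCapp, lam_univ]; rfl
    · calc (1 : ℝ≥0∞) = C ⟨univ, isCompact_univ⟩ := by rw [hCapp, lam_univ]; rfl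
        _ ≤ C.innerContent ⟨univ, isOpen_univ⟩ := C.le_innerContent _ _ (subset_refl _)
        _ = C.outerMeasure univ := (C.outerMeasure_opens ⟨univ, isOpen_univ⟩).symm
  haveI hCprob : IsProbabilityMeasure C.measure := ⟨hCuniv⟩
  set μP : ProbabilityMeasure X := ⟨C.measure, hCprob⟩ with hμPdef
  refine ⟨μP, φ, hφ, ?_⟩
  apply MeasureTheory.tendsto_of_forall_isOpen_le_liminf
  intro G hG
  have hbound : ∀ K : TopologicalSpace.Compacts X, (K : Set X) ⊆ G →
      lam K ≤ atTop.liminf (fun k => μs (φ k) G) := by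
    intro K hKG
    obtain ⟨A, hA𝒜, hKA, hAG⟩ := hshrink K K.2 G hG hKG
    obtain ⟨mA, hmA⟩ := hmem𝒜 _ hA𝒜
    refine (lam_le K (m := mA) (hmA ▸ hKA)).trans ?_
    have hlimeq : atTop.liminf (fun k => μs (φ k) (e mA)) = LN mA := (hm mA).liminf_eq
    rw [← hlimeq]
    refine liminf_le_liminf (Eventually.of_forall
      (fun k => (μs (φ k)).apply_mono (hmA ▸ hAG : e mA ⊆ G))) ?_ ?_
    · exact isBoundedUnder_of (f := (atTop : Filter ℕ)) ⟨0, fun k => zero_le⟩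
    · exact IsBoundedUnder.isCoboundedUnder_ge
        (isBoundedUnder_of (f := (atTop : Filter ℕ)) ⟨1, fun k => (μs (φ k)).apply_le_one G⟩)
  have hEE : (μP : Measure X) G ≤ ((atTop.liminf (fun k => μs (φ k) G) : ℝ≥0) : ℝ≥0∞) := by
    show C.measure G ≤ _
    rw [C.measure_apply hG.measurableSet]
    have houter : C.outerMeasure G = C.innerContent ⟨G, hG⟩ := by
      have := C.outerMeasure_opens ⟨G, hG⟩
      simpa using this
    rw [houter]
    unfold MeasureTheory.Content.innerContent
    refine iSup₂_le ?_
    intro K hKG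
    exact ENNReal.coe_le_coe.mpr (hbound K hKG)
  have h7 : ((μP G : ℝ≥0) : ℝ≥0∞) ≤ ((atTop.liminf (fun k => μs (φ k) G) : ℝ≥0) : ℝ≥0∞) := by
    rw [ProbabilityMeasure.ennreal_coeFn_eq_coeFn_toMeasure]
    exact hEE
  exact ENNReal.coe_le_coe.mp h7

lemma exists_absBound {ℰ : ProbabilityMeasure X → ℝ} (hE : Continuous ℰ) :
    ∃ C : ℝ, ∀ μ : ProbabilityMeasure X, |ℰ μ| ≤ C := by
  by_cases hne : Nonempty (ProbabilityMeasure X)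
  · by_contra hnot
    push_neg at hnot
    choose μs hμs using fun k : ℕ => hnot (k : ℝ)
    obtain ⟨μ, φ, hφ, hten⟩ := exists_seq_tendsto_probabilityMeasure μs
    have htend : Tendsto (fun k => |ℰ (μs (φ k))|) atTop (𝓝 |ℰ μ|) :=
      ((hE.tendsto μ).comp hten).abs
    have hb : ∀ᶠ k in atTop, |ℰ (μs (φ k))| < |ℰ μ| + 1 :=
      htend.eventually_lt_const (lt_add_one _)
    obtain ⟨k, hk1, hk2⟩ := (hb.and (eventually_ge_atTop ⌈|ℰ μ| + 1⌉₊)).exists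
    have h3 : ((φ k : ℕ) : ℝ) < |ℰ (μs (φ k))| := hμs (φ k)
    have h4 : (k : ℝ) ≤ ((φ k : ℕ) : ℝ) := by exact_mod_cast hφ.le_apply
    have h5 : |ℰ μ| + 1 ≤ (⌈|ℰ μ| + 1⌉₊ : ℝ) := Nat.le_ceil _
    have h6 : ((⌈|ℰ μ| + 1⌉₊ : ℕ) : ℝ) ≤ (k : ℝ) := by exact_mod_cast hk2
    linarith [hk1]
  · exact ⟨0, fun μ => absurd ⟨μ⟩ hne⟩

end Part1

section AuxLemmas
open Topology

lemma empPM_coe (T : X → X) {n : ℕ} (hn : n ≠ 0) (x : X) :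
    (empPM T n x : Measure X) = empMeas T n x := by
  simp only [empPM, hn, ↓reduceDIte]
  rfl

lemma integral_empPM (T : X → X) {n : ℕ} (hn : n ≠ 0) {g : X → ℝ} (hg : Continuous g) (x : X) :
    ∫ z, g z ∂(empPM T n x : Measure X)
      = (n : ℝ)⁻¹ * ∑ i ∈ Finset.range n, g (T^[i] x) := by
  have hint : ∀ i ∈ Finset.range n, Integrable g (Measure.dirac (T^[i] x)) := by
    intro i _
    exact hg.integrable_of_hasCompactSupport ((isClosed_tsupport g).isCompact)
  rw [empPM_coe T hn, empMeas, integral_smul_measure, integral_finset_sum_measure hint]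
  simp [integral_dirac, ENNReal.toReal_inv, smul_eq_mul]

lemma wass_empPM_le (T : X → X) {n : ℕ} (hn : n ≠ 0) {ε : ℝ} (hε : 0 ≤ ε) {x y : X}
    (h : ∀ i < n, dist (T^[i] x) (T^[i] y) ≤ ε) :
    Wass (empPM T n x : Measure X) (empPM T n y : Measure X) ≤ ε := by
  refine Real.sSup_le ?_ hε
  rintro r ⟨g, hg, rfl⟩
  rw [integral_empPM T hn hg.continuous, integral_empPM T hn hg.continuous, ← mul_sub,
    ← Finset.sum_sub_distrib]
  have hterm : ∀ i ∈ Finset.range n, g (T^[i] x) - g (T^[i] y) ≤ ε := by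
    intro i hi
    have hd := hg.dist_le_mul (T^[i] x) (T^[i] y)
    rw [NNReal.coe_one, one_mul] at hd
    calc g (T^[i] x) - g (T^[i] y) ≤ |g (T^[i] x) - g (T^[i] y)| := le_abs_self _
      _ = dist (g (T^[i] x)) (g (T^[i] y)) := (Real.dist_eq _ _).symm
      _ ≤ dist (T^[i] x) (T^[i] y) := hd
      _ ≤ ε := h i (Finset.mem_range.mp hi)
  have hsum : ∑ i ∈ Finset.range n, (g (T^[i] x) - g (T^[i] y)) ≤ (n : ℝ) * ε := by
    calc ∑ i ∈ Finset.range n, (g (T^[i] x) - g (T^[i] y)) ≤ ∑ _i ∈ Finset.range n, ε :=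
        Finset.sum_le_sum hterm
      _ = (n : ℝ) * ε := by rw [Finset.sum_const, Finset.card_range, nsmul_eq_mul]
  calc (n : ℝ)⁻¹ * ∑ i ∈ Finset.range n, (g (T^[i] x) - g (T^[i] y))
      ≤ (n : ℝ)⁻¹ * ((n : ℝ) * ε) := by
        refine mul_le_mul_of_nonneg_left hsum (by positivity)
    _ = ε := by
        rw [← mul_assoc, inv_mul_cancel₀ (Nat.cast_ne_zero.mpr hn), one_mul]

lemma sum_image_le_sum {γ : Type*} (s : Finset γ) (g : γ → Set X)
    (f : Set X → ℝ) (hf : ∀ a, 0 ≤ f a) :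
    ∑ B ∈ s.image g, f B ≤ ∑ y ∈ s, f (g y) := by
  classical
  induction s using Finset.induction_on with
  | empty => simp
  | @insert a s ha ih =>
    rw [Finset.image_insert]
    by_cases hmem : g a ∈ s.image g
    · rw [Finset.insert_eq_self.mpr hmem, Finset.sum_insert ha]
      exact ih.trans (le_add_of_nonneg_left (hf _))
    · rw [Finset.sum_insert hmem, Finset.sum_insert ha]
      exact add_le_add_right ih _

lemma exists_spanning (T : X → X) (hT : Continuous T) (n : ℕ) {ρ : ℝ} (hρ : 0 < ρ) :
    ∃ F : Finset X, IsSpanning T n ρ F := by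
  classical
  set V : X → Set X := fun y => ⋂ i ∈ Finset.range n, T^[i] ⁻¹' Metric.ball (T^[i] y) ρ with hV
  have hVopen : ∀ y, IsOpen (V y) :=
    fun y => isOpen_biInter_finset fun i _ => (hT.iterate i).isOpen_preimage _ Metric.isOpen_ball
  have hcov : (univ : Set X) ⊆ ⋃ y : X, V y := by
    intro x _
    refine Set.mem_iUnion.mpr ⟨x, ?_⟩
    refine Set.mem_iInter₂.mpr fun i _ => ?_
    simp [Metric.mem_ball, hρ]
  obtain ⟨t, ht⟩ := isCompact_univ.elim_finite_subcover V hVopen hcov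
  refine ⟨t, fun x => ?_⟩
  obtain ⟨y, hyt, hxy⟩ := Set.mem_iUnion₂.mp (ht (Set.mem_univ x))
  refine ⟨y, hyt, fun i hi => ?_⟩
  have hm := Set.mem_iInter₂.mp hxy i (Finset.mem_range.mpr hi)
  simpa [Metric.mem_ball] using hm

end AuxLemmas

/-- if `δ` is a Lebesgue number of `𝒰` and `diam 𝒰 ≤ ε`, then
`e^{-n τ_ε} · p³_n(T,ℰ;𝒰) ≤ Q_n(T,ℰ,δ/2)`. -/
theorem p3_le_Qn (T : X → X) (hT : Continuous T)
    (ℰ : ProbabilityMeasure X → ℝ) (hE : Continuous ℰ)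
    (ε : ℝ) (hε : 0 < ε) (𝒰 : Finset (Set X)) (h𝒰 : IsOpenCover 𝒰)
    (hdiam : ∀ U ∈ 𝒰, Metric.diam U ≤ ε)
    (δ : ℝ) (hδ : 0 < δ) (hleb : ∀ x : X, ∃ U ∈ 𝒰, Metric.ball x δ ⊆ U)
    (n : ℕ) (hn : 1 ≤ n) :
    Real.exp (-(n * tauE ℰ ε)) * p3 T ℰ 𝒰 n ≤ Qn T ℰ n (δ / 2) := by
  classical
  have hn0 : n ≠ 0 := Nat.one_le_iff_ne_zero.mp hn
  obtain ⟨C, hC⟩ := exists_absBound hE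
  have hbdd : BddAbove {r | ∃ μ ν : ProbabilityMeasure X,
      Wass (μ : Measure X) (ν : Measure X) ≤ ε ∧ r = |ℰ μ - ℰ ν|} := by
    refine ⟨C + C, ?_⟩
    rintro r ⟨μ, ν, -, rfl⟩
    calc |ℰ μ - ℰ ν| ≤ |ℰ μ| + |ℰ ν| := by
          rw [sub_eq_add_neg]
          exact (abs_add_le _ _).trans (by rw [abs_neg])
      _ ≤ C + C := add_le_add (hC μ) (hC ν)
  have htau : ∀ x y : X, (∀ i < n, dist (T^[i] x) (T^[i] y) ≤ ε) →
      ℰ (empPM T n x) - ℰ (empPM T n y) ≤ tauE ℰ ε := by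
    intro x y h
    have h1 : |ℰ (empPM T n x) - ℰ (empPM T n y)| ≤ tauE ℰ ε :=
      le_csSup hbdd ⟨empPM T n x, empPM T n y, wass_empPM_le T hn0 hε.le h, rfl⟩
    exact (le_abs_self _).trans h1
  have hkey : ∀ x y : X, (∀ i < n, dist (T^[i] x) (T^[i] y) ≤ ε) →
      wt T ℰ n x ≤ Real.exp ((n : ℝ) * tauE ℰ ε) * wt T ℰ n y := by
    intro x y h
    simp only [wt]
    rw [← Real.exp_add, Real.exp_le_exp]
    have h2 := mul_le_mul_of_nonneg_left (htau x y h) (by positivity : (0:ℝ) ≤ (n:ℝ))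
    rw [mul_sub] at h2
    linarith
  have hp3b : BddBelow {r | ∃ β : Finset (Set X), β ⊆ joinF T 𝒰 n ∧
      ⋃₀ (β : Set (Set X)) = univ ∧ r = ∑ B ∈ β, sSup (wt T ℰ n '' B)} := by
    refine ⟨0, ?_⟩
    rintro r ⟨β, -, -, rfl⟩
    exact Finset.sum_nonneg fun B _ => Real.sSup_nonneg
      (by rintro _ ⟨x, -, rfl⟩; exact (Real.exp_pos _).le)
  obtain ⟨F₀, hF₀⟩ := exists_spanning T hT n (by linarith : (0:ℝ) < δ / 2)
  refine le_csInf ⟨_, F₀, hF₀, rfl⟩ ?_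
  rintro r ⟨F, hF, rfl⟩
  choose U hU1 hU2 using hleb
  set By : X → Set X := fun y => ⋂ i : Fin n, T^[(i : ℕ)] ⁻¹' U (T^[(i : ℕ)] y) with hBydef
  have hBymem : ∀ y : X, By y ∈ joinF T 𝒰 n := by
    intro y
    rw [hBydef]
    exact Finset.mem_image.mpr ⟨fun i => U (T^[(i : ℕ)] y),
      Fintype.mem_piFinset.mpr (fun i => hU1 _), rfl⟩
  set β : Finset (Set X) := F.image By with hβ
  have hβsub : β ⊆ joinF T 𝒰 n := by
    intro B hB
    obtain ⟨y, -, rfl⟩ := Finset.mem_image.mp hB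
    exact hBymem y
  have hβcov : ⋃₀ (β : Set (Set X)) = univ := by
    refine Set.eq_univ_of_forall fun x => ?_
    obtain ⟨y, hyF, hy⟩ := hF x
    refine ⟨By y, Finset.mem_coe.mpr (Finset.mem_image_of_mem By hyF), ?_⟩
    rw [hBydef]
    refine Set.mem_iInter.mpr fun i => ?_
    refine hU2 (T^[(i : ℕ)] y) (Metric.mem_ball.mpr ?_)
    calc dist (T^[(i : ℕ)] x) (T^[(i : ℕ)] y) < δ / 2 := hy (i : ℕ) i.2
      _ < δ := by linarith
  have h1 : p3 T ℰ 𝒰 n ≤ ∑ B ∈ β, sSup (wt T ℰ n '' B) :=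
    csInf_le hp3b ⟨β, hβsub, hβcov, rfl⟩
  have h2 : ∑ B ∈ β, sSup (wt T ℰ n '' B) ≤ ∑ y ∈ F, sSup (wt T ℰ n '' By y) :=
    sum_image_le_sum F By (fun B => sSup (wt T ℰ n '' B))
      (fun B => Real.sSup_nonneg (by rintro _ ⟨x, -, rfl⟩; exact (Real.exp_pos _).le))
  have h3 : ∀ y ∈ F, sSup (wt T ℰ n '' By y) ≤ Real.exp ((n : ℝ) * tauE ℰ ε) * wt T ℰ n y := by
    intro y _
    have hwt : (0:ℝ) < wt T ℰ n y := Real.exp_pos _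
    refine Real.sSup_le ?_ (by positivity)
    rintro _ ⟨x, hx, rfl⟩
    rw [hBydef] at hx
    refine hkey x y fun i hi => ?_
    have hxi : T^[i] x ∈ U (T^[i] y) := by
      have hmem := Set.mem_iInter.mp hx ⟨i, hi⟩
      simpa using hmem
    have hyi : T^[i] y ∈ U (T^[i] y) := hU2 (T^[i] y) (Metric.mem_ball_self hδ)
    calc dist (T^[i] x) (T^[i] y) ≤ Metric.diam (U (T^[i] y)) :=
        Metric.dist_le_diam_of_mem (isCompact_univ.isBounded.subset (Set.subset_univ _)) hxi hyi
      _ ≤ ε := hdiam _ (hU1 _)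
  have h4 : p3 T ℰ 𝒰 n ≤ Real.exp ((n : ℝ) * tauE ℰ ε) * ∑ y ∈ F, wt T ℰ n y := by
    refine h1.trans (h2.trans ?_)
    rw [Finset.mul_sum]
    exact Finset.sum_le_sum h3
  calc Real.exp (-(n * tauE ℰ ε)) * p3 T ℰ 𝒰 n
      ≤ Real.exp (-(n * tauE ℰ ε)) * (Real.exp ((n : ℝ) * tauE ℰ ε) * ∑ y ∈ F, wt T ℰ n y) :=
        mul_le_mul_of_nonneg_left h4 (Real.exp_pos _).le
    _ = ∑ y ∈ F, wt T ℰ n y := by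
        rw [← mul_assoc, ← Real.exp_add, neg_add_cancel, Real.exp_zero, one_mul]
end

section
/- Let (X,T) be a topological dynamical system, ℰ an energy, 𝒰 a finite open cover with Lebesgue number δ > 0. If F is an (n,δ/2)-spanning set of X, then there is a finite subcover β of 𝒰_0^{n-1} such that ∑_{B∈β} inf_{x∈B} e^{nℰ(Δ_x^n)} ≤ ∑_{x∈F} e^{nℰ(Δ_x^n)}. In particular, p⁴_n(T,ℰ;𝒰) ≤ Q_n(T,ℰ,δ/2). -/
open MeasureTheory Filter Set
open scoped ENNReal NNReal Classical

set_option linter.unusedSectionVars false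

variable {X : Type*} [MetricSpace X] [CompactSpace X] [MeasurableSpace X] [BorelSpace X]

lemma sum_image_le_aux {α β : Type*} [DecidableEq β] (s : Finset α) (g : α → β) (f : β → ℝ)
    (hf : ∀ a ∈ s, 0 ≤ f (g a)) : ∑ b ∈ s.image g, f b ≤ ∑ a ∈ s, f (g a) := by
  induction s using Finset.induction with
  | empty => simp
  | insert _ _ ha ih =>
    rename_i a s
    rw [Finset.image_insert, Finset.sum_insert ha]
    have ih' := ih fun x hx => hf x (Finset.mem_insert_of_mem hx)
    by_cases h : g a ∈ s.image g
    · rw [Finset.insert_eq_self.2 h]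
      exact le_trans ih' (le_add_of_nonneg_left (hf a (Finset.mem_insert_self a s)))
    · rw [Finset.sum_insert h]
      exact add_le_add le_rfl ih'

lemma wt_nonneg (T : X → X) (ℰ : ProbabilityMeasure X → ℝ) (n : ℕ) (x : X) :
    0 ≤ wt T ℰ n x := (Real.exp_pos _).le

lemma sInf_wt_nonneg (T : X → X) (ℰ : ProbabilityMeasure X → ℝ) (n : ℕ) (B : Set X) :
    0 ≤ sInf (wt T ℰ n '' B) := by
  rcases B.eq_empty_or_nonempty with h | h
  · simp [h, Real.sInf_empty]
  · exact le_csInf (h.image _) (by rintro r ⟨x, -, rfl⟩; exact wt_nonneg T ℰ n x)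

lemma key_subcover (T : X → X) (ℰ : ProbabilityMeasure X → ℝ)
    (𝒰 : Finset (Set X)) (δ : ℝ) (hδ : 0 < δ)
    (hleb : ∀ x : X, ∃ U ∈ 𝒰, Metric.ball x δ ⊆ U)
    (n : ℕ) (F : Finset X) (hspan : IsSpanning T n (δ / 2) F) :
    ∃ β : Finset (Set X), β ⊆ joinF T 𝒰 n ∧ ⋃₀ (β : Set (Set X)) = univ ∧
      ∑ B ∈ β, sInf (wt T ℰ n '' B) ≤ ∑ x ∈ F, wt T ℰ n x := by
  choose u hu hball using fun x i => hleb (T^[i] x)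
  set g : X → Set X := fun x => ⋂ i : Fin n, T^[(i : ℕ)] ⁻¹' u x (i : ℕ) with hg
  have hmem : ∀ x, g x ∈ joinF T 𝒰 n := by
    intro x
    refine Finset.mem_image.2 ⟨fun i : Fin n => u x (i : ℕ), ?_, rfl⟩
    exact Fintype.mem_piFinset.2 fun i => hu x (i : ℕ)
  have hself : ∀ x, x ∈ g x := by
    intro x
    refine Set.mem_iInter.2 fun i => hball x (i : ℕ) ?_
    exact Metric.mem_ball_self hδ
  refine ⟨F.image g, ?_, ?_, ?_⟩
  · intro B hB
    rcases Finset.mem_image.1 hB with ⟨x, -, rfl⟩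
    exact hmem x
  · apply Set.eq_univ_of_forall
    intro y
    rcases hspan y with ⟨x, hxF, hx⟩
    refine ⟨g x, by simpa using Finset.mem_image_of_mem g hxF, ?_⟩
    refine Set.mem_iInter.2 fun i => hball x (i : ℕ) ?_
    have := hx (i : ℕ) i.2
    exact Metric.mem_ball.2 (lt_of_lt_of_le this (by linarith))
  · calc ∑ B ∈ F.image g, sInf (wt T ℰ n '' B)
        ≤ ∑ x ∈ F, sInf (wt T ℰ n '' g x) :=
          sum_image_le_aux F g _ (fun x _ => sInf_wt_nonneg T ℰ n _)
      _ ≤ ∑ x ∈ F, wt T ℰ n x := by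
          refine Finset.sum_le_sum fun x _ => ?_
          exact csInf_le ⟨0, by rintro r ⟨z, -, rfl⟩; exact wt_nonneg T ℰ n z⟩
            ⟨x, hself x, rfl⟩

/-- every `(n,δ/2)`-spanning set dominates a subcover of `𝒰_0^{n-1}`;
in particular `p⁴_n(T,ℰ;𝒰) ≤ Q_n(T,ℰ,δ/2)`. -/
theorem p4_le_Qn (T : X → X) (hT : Continuous T)
    (ℰ : ProbabilityMeasure X → ℝ) (hE : Continuous ℰ)
    (𝒰 : Finset (Set X)) (h𝒰 : IsOpenCover 𝒰)
    (δ : ℝ) (hδ : 0 < δ) (hleb : ∀ x : X, ∃ U ∈ 𝒰, Metric.ball x δ ⊆ U)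
    (n : ℕ) (hn : 1 ≤ n) (F : Finset X) (hspan : IsSpanning T n (δ / 2) F) :
    (∃ β : Finset (Set X), β ⊆ joinF T 𝒰 n ∧ ⋃₀ (β : Set (Set X)) = univ ∧
      ∑ B ∈ β, sInf (wt T ℰ n '' B) ≤ ∑ x ∈ F, wt T ℰ n x) ∧
    p4 T ℰ 𝒰 n ≤ Qn T ℰ n (δ / 2) := by
  have hkey := key_subcover T ℰ 𝒰 δ hδ hleb n
  refine ⟨hkey F hspan, ?_⟩
  have hbdd : BddBelow {r | ∃ β : Finset (Set X), β ⊆ joinF T 𝒰 n ∧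
      ⋃₀ (β : Set (Set X)) = univ ∧ r = ∑ B ∈ β, sInf (wt T ℰ n '' B)} := by
    refine ⟨0, ?_⟩
    rintro r ⟨β, -, -, rfl⟩
    exact Finset.sum_nonneg fun B _ => sInf_wt_nonneg T ℰ n B
  refine le_csInf ⟨_, F, hspan, rfl⟩ ?_
  rintro r ⟨F', hF', rfl⟩
  rcases hkey F' hF' with ⟨β, h1, h2, h3⟩
  exact le_trans (csInf_le hbdd ⟨β, h1, h2, rfl⟩) h3
end
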